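/- Let T, S : U → U be diffeomorphisms of an open set U ⊆ ℝⁿ, and suppose μ is a Borel probability measure on U that is both T-invariant and S-invariant with compact support. Let Y : U → ℝᵐ be a C¹ map that is injective on supp(μ). If the pushforward measures satisfy (Y, Y∘T)#μ = (Y, Y∘S)#μ as measures on ℝ^{2m}, then T = S on supp(μ). -/
import Mathlib


open MeasureTheory

/-- Support of a Borel measure. -/
def msupport {X : Type*} [TopologicalSpace X] [MeasurableSpace X]
    (μ : Measure X) : Set X :=
  {x | ∀ O : Set X, IsOpen O → x ∈ O → 0 < μ O}

lemma msupport_compl_null {X : Type*} [TopologicalSpace X] [MeasurableSpace X]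
    [SecondCountableTopology X] (μ : Measure X) : μ (msupport μ)ᶜ = 0 := by
  apply measure_null_of_locally_null
  intro x hx
  simp only [msupport, Set.mem_compl_iff, Set.mem_setOf_eq, not_forall] at hx
  obtain ⟨O, hO, hxO, h⟩ := hx
  exact ⟨O, nhdsWithin_le_nhds (hO.mem_nhds hxO), le_zero_iff.mp (not_lt.mp h)⟩

lemma mem_msupport_map {X Z : Type*} [TopologicalSpace X] [MeasurableSpace X]
    [OpensMeasurableSpace X] [TopologicalSpace Z] [MeasurableSpace Z]
    [BorelSpace Z] (μ : Measure X) (f : X → Z) (hf : Continuous f)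
    {x : X} (hx : x ∈ msupport μ) : f x ∈ msupport (μ.map f) := by
  intro O hO hxO
  rw [Measure.map_apply hf.measurable hO.measurableSet]
  exact hx _ (hO.preimage hf) hxO

/-- If `μ` is a compactly supported Borel probability measure invariant under
both `T` and `S`, `Y` is injective on `supp μ`, and the pushforwards of `μ`
under `x ↦ (Y x, Y (T x))` and `x ↦ (Y x, Y (S x))` coincide, then `T = S`
on `supp μ`. -/
theorem eq_on_support_of_graph_measures
    {n m : ℕ} (U : Set (EuclideanSpace ℝ (Fin n))) (hU : IsOpen U)
    (T S : ↥U ≃ₜ ↥U)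
    (μ : Measure ↥U) [IsProbabilityMeasure μ]
    (hcpt : IsCompact (msupport μ))
    (hTinv : μ.map T = μ) (hSinv : μ.map S = μ)
    (Y : ↥U → EuclideanSpace ℝ (Fin m)) (hYc : Continuous Y)
    (hYinj : Set.InjOn Y (msupport μ))
    (hpush : μ.map (fun x => (Y x, Y (T x))) = μ.map (fun x => (Y x, Y (S x)))) :
    ∀ x ∈ msupport μ, T x = S x := by
  intro x hx
  set K := msupport μ with hK
  -- T and S preserve the support
  have hTK : ∀ y ∈ K, T y ∈ K := by
    intro y hy
    have := mem_msupport_map μ T T.continuous hy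
    rwa [hTinv] at this
  have hSK : ∀ y ∈ K, S y ∈ K := by
    intro y hy
    have := mem_msupport_map μ S S.continuous hy
    rwa [hSinv] at this
  set g : ↥U → EuclideanSpace ℝ (Fin m) × EuclideanSpace ℝ (Fin m) :=
    fun y => (Y y, Y (S y)) with hg
  have hgc : Continuous g := hYc.prodMk (hYc.comp S.continuous)
  -- (Y x, Y (T x)) lies in the support of the pushforward under g
  have hmem : (Y x, Y (T x)) ∈ msupport (μ.map g) := by
    rw [← hpush]
    exact mem_msupport_map μ _ (hYc.prodMk (hYc.comp T.continuous)) hx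
  -- the support of the pushforward is contained in the image of K
  have himg : msupport (μ.map g) ⊆ g '' K := by
    intro z hz
    by_contra hnz
    have hC : IsClosed (g '' K) := (hcpt.image hgc).isClosed
    have hpos : 0 < (μ.map g) (g '' K)ᶜ := hz _ hC.isOpen_compl hnz
    rw [Measure.map_apply hgc.measurable hC.isOpen_compl.measurableSet] at hpos
    have hsub : g ⁻¹' (g '' K)ᶜ ⊆ Kᶜ := fun y hy hyK => hy (Set.mem_image_of_mem _ hyK)
    exact absurd (measure_mono_null hsub (msupport_compl_null μ)) hpos.ne'
  obtain ⟨y, hyK, hyeq⟩ := himg hmem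
  have h1 : Y y = Y x := congrArg Prod.fst hyeq
  have h2 : Y (S y) = Y (T x) := congrArg Prod.snd hyeq
  have hyx : y = x := hYinj hyK hx h1
  subst hyx
  exact (hYinj (hSK y hyK) (hTK y hyK) h2).symm
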